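/- Let X be a tuple-independent random subset of a finite set T with membership probabilities p : T → [0,1], and let W ⊆ T be nonempty. Consider the two-variable real polynomial F(x,y) = Π_{t∈W} ((1 − p(t)) + p(t)·x) · Π_{t∈T\W} ((1 − p(t)) + p(t)·y), and let c_{i,j} denote the coefficient of x^i y^j in F. Then the expected Jaccard distance from W to X satisfies E[d_J(W, X)] = Σ_{i=0}^{|W|} Σ_{j=0}^{|T\W|} c_{i,j} · (|W| − i + j)/(|W| + j). -/

import Mathlib

open Finset MvPolynomial

/-- The Jaccard distance `d_J(A,B) = |A Δ B| / |A ∪ B|` between two finite sets.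
(When `A = B = ∅` both numerator and denominator are `0`, and Lean's convention `0 / 0 = 0`
realizes the convention `d_J(∅,∅) = 0`.) -/
noncomputable def jaccardDist {T : Type*} [DecidableEq T] (A B : Finset T) : ℝ :=
  ((symmDiff A B).card : ℝ) / ((A ∪ B).card : ℝ)

lemma finsupp_pair_eq (a b i j : ℕ) :
    (Finsupp.single (0:Fin 2) a + Finsupp.single 1 b
      = Finsupp.single 0 i + Finsupp.single 1 j) ↔ (a = i ∧ b = j) := by
  constructor
  · intro h
    have h0 := DFunLike.congr_fun h 0
    have h1 := DFunLike.congr_fun h 1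
    simp [Finsupp.single_apply] at h0 h1
    exact ⟨h0, h1⟩
  · rintro ⟨rfl, rfl⟩; rfl

lemma prod_expand {T : Type*} [DecidableEq T] (s : Finset T) (q : T → ℝ) (v : Fin 2) :
    ∏ t ∈ s, (C (1 - q t) + C (q t) * X v) =
      ∑ S ∈ s.powerset, monomial (Finsupp.single v S.card)
        ((∏ t ∈ S, q t) * ∏ t ∈ s \ S, (1 - q t)) := by
  have : ∀ t ∈ s, (C (1 - q t) + C (q t) * X v) = (C (q t) * X v + C (1 - q t)) := by
    intro t _; ring
  rw [Finset.prod_congr rfl this, Finset.prod_add]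
  refine Finset.sum_congr rfl fun S hS => ?_
  rw [Finset.prod_mul_distrib, Finset.prod_const, ← map_prod, ← map_prod,
    X_pow_eq_monomial, mul_comm (C (∏ t ∈ S, q t)) _, mul_assoc, ← C_mul,
    mul_comm ((monomial _) 1), C_mul_monomial, mul_one]

lemma jac_eq {T : Type*} [DecidableEq T] (W A : Finset T) :
    ((symmDiff W A).card : ℝ) = ((W.card : ℝ) - ((A ∩ W).card : ℝ) + ((A \ W).card : ℝ)) ∧
    (((W ∪ A).card : ℝ) = (W.card : ℝ) + ((A \ W).card : ℝ)) := by
  have h1 : (W ∩ A).card + (W \ A).card = W.card := Finset.card_inter_add_card_sdiff W A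
  have h2 : symmDiff W A = (W \ A) ∪ (A \ W) := by
    ext t; simp [symmDiff, Finset.mem_union, Finset.mem_sdiff]
  have hd : Disjoint (W \ A) (A \ W) := by
    rw [Finset.disjoint_left]; intro t ht ht'
    exact (Finset.mem_sdiff.mp ht).2 (Finset.mem_sdiff.mp ht').1
  have h3 : (symmDiff W A).card = (W \ A).card + (A \ W).card := by
    rw [h2, Finset.card_union_of_disjoint hd]
  have h4 : W ∪ A = W ∪ (A \ W) := (Finset.union_sdiff_self_eq_union).symm
  have h5 : (W ∪ A).card = W.card + (A \ W).card := by
    rw [h4, Finset.card_union_of_disjoint Finset.disjoint_sdiff]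
  constructor
  · rw [h3]
    push_cast
    have : ((W ∩ A).card : ℝ) + ((W \ A).card : ℝ) = (W.card : ℝ) := by exact_mod_cast congrArg Nat.cast h1
    rw [Finset.inter_comm A W]
    linarith
  · rw [h5]; push_cast; ring


/-- For a tuple-independent random subset `X` of a finite set `T` with membership
probabilities `p`, and a nonempty `W ⊆ T`, with
`F(x,y) = ∏_{t∈W} ((1−p t) + p t·x) · ∏_{t∉W} ((1−p t) + p t·y)` and `c_{i,j}` the coefficient
of `x^i y^j` in `F`, the expected Jaccard distance satisfies
`E[d_J(W, X)] = Σ_{i=0}^{|W|} Σ_{j=0}^{|T\W|} c_{i,j} · (|W| − i + j)/(|W| + j)`. -/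
theorem stmt_3 {T : Type*} [Fintype T] [DecidableEq T]
    (p : T → ℝ) (hp : ∀ t, 0 ≤ p t ∧ p t ≤ 1)
    (W : Finset T) (hW : W.Nonempty) :
    (∑ A : Finset T, ((∏ t ∈ A, p t) * ∏ t ∈ Aᶜ, (1 - p t)) * jaccardDist W A) =
      ∑ i ∈ Finset.range (W.card + 1), ∑ j ∈ Finset.range (Wᶜ.card + 1),
        MvPolynomial.coeff (Finsupp.single (0 : Fin 2) i + Finsupp.single (1 : Fin 2) j)
          ((∏ t ∈ W, (C (1 - p t) + C (p t) * X (0 : Fin 2))) *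
            ∏ t ∈ Wᶜ, (C (1 - p t) + C (p t) * X (1 : Fin 2)))
        * (((W.card : ℝ) - (i : ℝ) + (j : ℝ)) / ((W.card : ℝ) + (j : ℝ))) := by
  set a : Finset T → ℝ := fun S => (∏ t ∈ S, p t) * ∏ t ∈ W \ S, (1 - p t) with ha
  set b : Finset T → ℝ := fun U => (∏ t ∈ U, p t) * ∏ t ∈ Wᶜ \ U, (1 - p t) with hb
  set r : ℕ → ℕ → ℝ := fun i j => (((W.card : ℝ) - (i : ℝ) + (j : ℝ)) / ((W.card : ℝ) + (j : ℝ))) with hr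
  -- coefficient computation
  have hcoeff : ∀ i j, MvPolynomial.coeff (Finsupp.single (0 : Fin 2) i + Finsupp.single (1 : Fin 2) j)
          ((∏ t ∈ W, (C (1 - p t) + C (p t) * X (0 : Fin 2))) *
            ∏ t ∈ Wᶜ, (C (1 - p t) + C (p t) * X (1 : Fin 2)))
      = ∑ S ∈ W.powerset, ∑ U ∈ Wᶜ.powerset,
          if S.card = i ∧ U.card = j then a S * b U else 0 := by
    intro i j
    rw [prod_expand, prod_expand, Finset.sum_mul_sum]
    rw [MvPolynomial.coeff_sum]
    refine Finset.sum_congr rfl fun S hS => ?_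
    rw [MvPolynomial.coeff_sum]
    refine Finset.sum_congr rfl fun U hU => ?_
    rw [monomial_mul, MvPolynomial.coeff_monomial]
    simp only [finsupp_pair_eq]
    rfl
  -- RHS reorganization
  have hRHS : (∑ i ∈ Finset.range (W.card + 1), ∑ j ∈ Finset.range (Wᶜ.card + 1),
        (∑ S ∈ W.powerset, ∑ U ∈ Wᶜ.powerset,
          if S.card = i ∧ U.card = j then a S * b U else 0) * r i j)
      = ∑ S ∈ W.powerset, ∑ U ∈ Wᶜ.powerset, a S * b U * r S.card U.card := by
    simp only [Finset.sum_mul, ite_mul, zero_mul]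
    calc (∑ i ∈ Finset.range (W.card + 1), ∑ j ∈ Finset.range (Wᶜ.card + 1),
        ∑ S ∈ W.powerset, ∑ U ∈ Wᶜ.powerset,
          if S.card = i ∧ U.card = j then a S * b U * r i j else 0)
        = ∑ i ∈ Finset.range (W.card + 1), ∑ S ∈ W.powerset, ∑ j ∈ Finset.range (Wᶜ.card + 1),
            ∑ U ∈ Wᶜ.powerset, if S.card = i ∧ U.card = j then a S * b U * r i j else 0 :=
          Finset.sum_congr rfl fun i _ => Finset.sum_comm
      _ = ∑ S ∈ W.powerset, ∑ i ∈ Finset.range (W.card + 1), ∑ j ∈ Finset.range (Wᶜ.card + 1),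
            ∑ U ∈ Wᶜ.powerset, if S.card = i ∧ U.card = j then a S * b U * r i j else 0 :=
          Finset.sum_comm
      _ = ∑ S ∈ W.powerset, ∑ i ∈ Finset.range (W.card + 1), ∑ U ∈ Wᶜ.powerset,
            ∑ j ∈ Finset.range (Wᶜ.card + 1), if S.card = i ∧ U.card = j then a S * b U * r i j else 0 :=
          Finset.sum_congr rfl fun S _ => Finset.sum_congr rfl fun i _ => Finset.sum_comm
      _ = ∑ S ∈ W.powerset, ∑ U ∈ Wᶜ.powerset, ∑ i ∈ Finset.range (W.card + 1),
            ∑ j ∈ Finset.range (Wᶜ.card + 1), if S.card = i ∧ U.card = j then a S * b U * r i j else 0 :=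
          Finset.sum_congr rfl fun S _ => Finset.sum_comm
      _ = ∑ S ∈ W.powerset, ∑ U ∈ Wᶜ.powerset, a S * b U * r S.card U.card := by
          refine Finset.sum_congr rfl fun S hS => Finset.sum_congr rfl fun U hU => ?_
          have hSi : S.card ∈ Finset.range (W.card + 1) :=
            Finset.mem_range.mpr (Nat.lt_succ_of_le (Finset.card_le_card (Finset.mem_powerset.mp hS)))
          have hUj : U.card ∈ Finset.range (Wᶜ.card + 1) :=
            Finset.mem_range.mpr (Nat.lt_succ_of_le (Finset.card_le_card (Finset.mem_powerset.mp hU)))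
          have step : ∀ i ∈ Finset.range (W.card + 1),
              (∑ j ∈ Finset.range (Wᶜ.card + 1), if S.card = i ∧ U.card = j then a S * b U * r i j else 0)
                = if S.card = i then a S * b U * r i U.card else 0 := by
            intro i _
            by_cases h : S.card = i
            · simp only [h, true_and]
              rw [Finset.sum_ite_eq, if_pos hUj, if_pos trivial]
            · simp [h]
          rw [Finset.sum_congr rfl step, Finset.sum_ite_eq, if_pos hSi]
  simp only [hcoeff]
  rw [hRHS, ← Finset.sum_product']
  refine Finset.sum_nbij' (i := fun A => (A ∩ W, A \ W)) (j := fun P => P.1 ∪ P.2)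
    ?_ ?_ ?_ ?_ ?_
  · intro A _
    rw [Finset.mem_product]
    refine ⟨Finset.mem_powerset.mpr Finset.inter_subset_right, Finset.mem_powerset.mpr ?_⟩
    intro t ht
    exact Finset.mem_compl.mpr (Finset.mem_sdiff.mp ht).2
  · intro P _; exact Finset.mem_univ _
  · intro A _
    simp only
    ext t
    simp only [Finset.mem_union, Finset.mem_inter, Finset.mem_sdiff]
    tauto
  · intro P hP
    rw [Finset.mem_product] at hP
    obtain ⟨h1, h2⟩ := hP
    have h1' := Finset.mem_powerset.mp h1
    have h2' := Finset.mem_powerset.mp h2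
    have hPW : ∀ t ∈ P.2, t ∉ W := fun t ht => Finset.mem_compl.mp (h2' ht)
    ext1 <;> ext t <;>
      simp only [Finset.mem_inter, Finset.mem_union, Finset.mem_sdiff] <;>
      constructor
    · rintro ⟨h | h, hw⟩
      · exact h
      · exact absurd hw (hPW t h)
    · intro h; exact ⟨Or.inl h, h1' h⟩
    · rintro ⟨h | h, hw⟩
      · exact absurd (h1' h) hw
      · exact h
    · intro h; exact ⟨Or.inr h, hPW t h⟩
  · intro A _
    set S := A ∩ W with hSdef
    set U := A \ W with hUdef
    have hAU : A = S ∪ U := by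
      ext t; simp only [hSdef, hUdef, Finset.mem_union, Finset.mem_inter, Finset.mem_sdiff]; tauto
    have hdisj : Disjoint S U := by
      rw [Finset.disjoint_left]; intro t ht ht'
      exact (Finset.mem_sdiff.mp ht').2 (Finset.mem_inter.mp ht).2
    have hprod : (∏ t ∈ A, p t) = (∏ t ∈ S, p t) * ∏ t ∈ U, p t := by
      rw [hAU, Finset.prod_union hdisj]
    have hAc : Aᶜ = (W \ S) ∪ (Wᶜ \ U) := by
      ext t
      simp only [Finset.mem_compl, Finset.mem_union, Finset.mem_sdiff, hSdef, hUdef,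
        Finset.mem_inter, Finset.mem_compl]
      by_cases h : t ∈ W <;> tauto
    have hdisj2 : Disjoint (W \ S) (Wᶜ \ U) := by
      rw [Finset.disjoint_left]; intro t ht ht'
      exact Finset.mem_compl.mp (Finset.mem_sdiff.mp ht').1 (Finset.mem_sdiff.mp ht).1
    have hprodc : (∏ t ∈ Aᶜ, (1 - p t)) = (∏ t ∈ W \ S, (1 - p t)) * ∏ t ∈ Wᶜ \ U, (1 - p t) := by
      rw [hAc, Finset.prod_union hdisj2]
    have hjac : jaccardDist W A = r S.card U.card := by
      obtain ⟨e1, e2⟩ := jac_eq W A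
      rw [jaccardDist, e1, e2]
    rw [hprod, hprodc, hjac, ha, hb]
    ring
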